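/- For r > √2, p < r/2, q = (r/2)·tan ψ with ψ ∈ [0, π/2): r² - 1 + 2q·sin ψ - 2p(r - cos ψ) > 0. -/

import Mathlib

open Real

/-- Positivity of the numerator of the new defense margin after the DM step. -/
theorem dm_numerator_pos
    (r p q ψ : ℝ) (hr : Real.sqrt 2 < r) (hp : p < r / 2)
    (hq : q = (r / 2) * Real.tan ψ) (hψ : ψ ∈ Set.Ico 0 (π / 2)) :
    0 < r ^ 2 - 1 + 2 * q * Real.sin ψ - 2 * p * (r - Real.cos ψ) := by
  obtain ⟨h0, h1⟩ := hψ
  have hc : 0 < Real.cos ψ := Real.cos_pos_of_mem_Ioo ⟨by linarith [Real.pi_pos], h1⟩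
  have hr1 : 1 < r := lt_of_le_of_lt (by
    rw [show (1:ℝ) = Real.sqrt 1 by simp]
    exact Real.sqrt_le_sqrt (by norm_num)) hr
  have hcos1 : Real.cos ψ ≤ 1 := Real.cos_le_one ψ
  have hrc : 0 < r - Real.cos ψ := by linarith
  have htan : Real.tan ψ = Real.sin ψ / Real.cos ψ := Real.tan_eq_sin_div_cos ψ
  have hpyth : Real.sin ψ ^ 2 + Real.cos ψ ^ 2 = 1 := Real.sin_sq_add_cos_sq ψ
  have hkey : 2 * q * Real.sin ψ = r * (1 - Real.cos ψ ^ 2) / Real.cos ψ := by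
    rw [hq, htan]
    field_simp
    linear_combination hpyth
  rw [hkey]
  have h2 : 2 * p * (r - Real.cos ψ) < r * (r - Real.cos ψ) :=
    mul_lt_mul_of_pos_right (by linarith) hrc
  have h3 : r * (1 - Real.cos ψ ^ 2) / Real.cos ψ = r / Real.cos ψ - r * Real.cos ψ := by
    field_simp
  rw [h3]
  have h4 : r ≤ r / Real.cos ψ := by
    rw [le_div_iff₀ hc]; nlinarith
  nlinarith
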